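/- arXiv:1903.02777 — 6 statements merged into one kernel-verified Lean document; each statement's English description precedes it below -/
import Mathlib

section
/- Let G be a finite simple graph with chromatic number m, and let → be an acyclic orientation of G. Then the oriented graph contains a directed path on m vertices (i.e., a directed path v_0 → v_1 → ⋯ → v_{m-1} of length m−1). -/
/-- An orientation of a simple graph `G`: each edge of `G` gets exactly one
direction, and there are no other directed edges. -/
structure SimpleGraph.Orientation {V : Type*} (G : SimpleGraph V) where
  adj : V → V → Prop
  adj_sub : ∀ {u v : V}, adj u v → G.Adj u v
  choice : ∀ {u v : V}, G.Adj u v → adj u v ∨ adj v u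
  asymm : ∀ {u v : V}, adj u v → ¬ adj v u

namespace SimpleGraph.Orientation

variable {V : Type*} {G : SimpleGraph V} (O : G.Orientation)

/-- An orientation is acyclic if it has no directed cycles. -/
def Acyclic : Prop := ∀ v : V, ¬ Relation.TransGen O.adj v v

/-- `f` enumerates the vertices of a directed path `f 0 → f 1 → ⋯ → f k`. -/
def IsDipath {k : ℕ} (f : Fin (k + 1) → V) : Prop :=
  ∀ i : Fin k, O.adj (f i.castSucc) (f i.succ)

/-- An orientation is semi-transitive if it is acyclic and for every directed
path `v₀ → v₁ → ⋯ → v_k`, either `v₀` and `v_k` are non-adjacent in `G`, or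
`v_i → v_j` is a directed edge for all `i < j`. -/
def SemiTransitive : Prop :=
  O.Acyclic ∧ ∀ (k : ℕ) (f : Fin (k + 1) → V), O.IsDipath f →
    ¬ G.Adj (f 0) (f (Fin.last k)) ∨ ∀ i j : Fin (k + 1), i < j → O.adj (f i) (f j)

end SimpleGraph.Orientation

/-- A graph is semi-transitive if it admits a semi-transitive orientation. -/
def SimpleGraph.SemiTransitive {V : Type*} (G : SimpleGraph V) : Prop :=
  ∃ O : G.Orientation, O.SemiTransitive

/-- The Kneser graph `K(n,k)`: vertices are the `k`-element subsets of an
`n`-element set, two vertices adjacent iff the corresponding sets are disjoint. -/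
def kneserGraph (n k : ℕ) : SimpleGraph {s : Finset (Fin n) // s.card = k} where
  Adj A B := A ≠ B ∧ Disjoint A.val B.val
  symm := by
    constructor
    rintro A B ⟨h1, h2⟩
    exact ⟨h1.symm, h2.symm⟩
  loopless := by
    constructor
    rintro A ⟨h1, _⟩
    exact h1 rfl


namespace SimpleGraph.Orientation

variable {V : Type*} {G : SimpleGraph V} (O : G.Orientation)

lemma dipath_transGen' {k : ℕ} {f : Fin (k+1) → V} (hf : O.IsDipath f) :
    ∀ (j : ℕ) (hj : j ≤ k) (i : ℕ) (hi : i < j),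
      Relation.TransGen O.adj (f ⟨i, by omega⟩) (f ⟨j, by omega⟩) := by
  intro j
  induction j with
  | zero => intro _ i hi; omega
  | succ j ih =>
    intro hj i hi
    have step : O.adj (f ⟨j, by omega⟩) (f ⟨j+1, by omega⟩) := hf ⟨j, by omega⟩
    rcases Nat.lt_or_ge i j with h | h
    · exact (ih (by omega) i h).tail step
    · have : i = j := by omega
      subst this
      exact Relation.TransGen.single step

lemma dipath_injective (hO : O.Acyclic) {k : ℕ} {f : Fin (k+1) → V}
    (hf : O.IsDipath f) : Function.Injective f := by
  intro a b hab
  by_contra hne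
  rcases lt_trichotomy a b with h | h | h
  · have := O.dipath_transGen' hf b.val (by omega) a.val h
    rw [Fin.eta, Fin.eta, hab] at this
    exact hO _ this
  · exact hne h
  · have := O.dipath_transGen' hf a.val (by omega) b.val h
    rw [Fin.eta, Fin.eta, hab.symm] at this
    exact hO _ this

end SimpleGraph.Orientation

section GallaiRoyAux
variable {V : Type*} [Fintype V] {G : SimpleGraph V} (O : G.Orientation)

attribute [local instance] Classical.propDecidable

/-- longest dipath length starting at `v` -/
noncomputable def dipathLen (v : V) : ℕ :=
  Nat.findGreatest (fun n => ∃ f : Fin (n+1) → V, f 0 = v ∧ O.IsDipath f) (Fintype.card V)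

lemma dipathLen_spec (v : V) :
    ∃ f : Fin (dipathLen O v + 1) → V, f 0 = v ∧ O.IsDipath f := by
  exact Nat.findGreatest_spec
    (P := fun n => ∃ f : Fin (n+1) → V, f 0 = v ∧ O.IsDipath f)
    (Nat.zero_le (Fintype.card V)) ⟨fun _ => v, rfl, fun i => i.elim0⟩

lemma dipathLen_lt (hO : O.Acyclic) {u v : V} (h : O.adj u v) :
    dipathLen O v < dipathLen O u := by
  obtain ⟨f, hf0, hf⟩ := dipathLen_spec O v
  set g : Fin (dipathLen O v + 2) → V := Fin.cons u f with hg
  have hgp : O.IsDipath g := by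
    intro i
    refine Fin.cases ?_ (fun j => ?_) i
    · simpa [g, hf0] using h
    · have := hf j
      simpa [g, Fin.castSucc_succ] using this
  have hbound : dipathLen O v + 2 ≤ Fintype.card V := by
    simpa using Fintype.card_le_of_injective g (O.dipath_injective hO hgp)
  have : dipathLen O v + 1 ≤ dipathLen O u := by
    apply Nat.le_findGreatest (by omega)
    exact ⟨g, by simp [g], hgp⟩
  omega
end GallaiRoyAux

/-- A finite graph with chromatic number `m`, acyclically oriented,
contains a directed path on `m` vertices. -/
theorem chromatic_gives_long_dipath {V : Type*} [Fintype V] (G : SimpleGraph V)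
    (m : ℕ) (hm : G.chromaticNumber = m) (O : G.Orientation) (hO : O.Acyclic) :
    ∃ f : Fin m → V, ∀ (i : ℕ) (hi : i + 1 < m),
      O.adj (f ⟨i, Nat.lt_of_succ_lt hi⟩) (f ⟨i + 1, hi⟩) := by
  by_cases hV : Nonempty V
  · obtain ⟨v₀, -, hv₀⟩ := Finset.exists_mem_eq_sup Finset.univ
      (Finset.univ_nonempty) (dipathLen O)
    set N := Finset.univ.sup (dipathLen O) with hN
    have hcol : G.Colorable (N + 1) := by
      refine ⟨SimpleGraph.Coloring.mk
        (fun v => ⟨dipathLen O v, by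
          have : dipathLen O v ≤ N := Finset.le_sup (Finset.mem_univ v)
          omega⟩) ?_⟩
      intro u v huv hne
      rcases O.choice huv with h | h
      · have := dipathLen_lt O hO h
        simp only [Fin.mk.injEq] at hne; omega
      · have := dipathLen_lt O hO h
        simp only [Fin.mk.injEq] at hne; omega
    have hle : (m : ℕ∞) ≤ (N + 1 : ℕ) := hm ▸ hcol.chromaticNumber_le
    have hmN : m ≤ N + 1 := by exact_mod_cast hle
    obtain ⟨f, hf0, hf⟩ := dipathLen_spec O v₀
    rw [hv₀] at hmN
    exact ⟨fun i => f ⟨i, by omega⟩, fun i hi => hf ⟨i, by omega⟩⟩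
  · have : IsEmpty V := not_nonempty_iff.mp hV
    have hm0 : m = 0 := by
      rw [SimpleGraph.chromaticNumber_eq_zero_of_isEmpty (G := G)] at hm
      exact_mod_cast hm.symm
    subst hm0
    exact ⟨fun i => i.elim0, fun i hi => by omega⟩
end

section
/- Let G be a finite simple graph equipped with a semi-transitive (i.e., acyclic and shortcut-free) orientation →, and let a, b, c, d be four distinct vertices such that ab, bc, cd, da are all edges of G, the edges ab and bc are oriented as a→b and b→c, and the subgraph induced by {a,b,c,d} is not a complete graph K_4 (i.e., at least one of the pairs {a,c}, {b,d} is a non-edge of G). Then the edges da and cd are oriented as a→d and d→c. -/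
lemma path3_aux {V : Type*} {G : SimpleGraph V} (O : G.Orientation)
    (hO : O.SemiTransitive) (w x y z : V)
    (h1 : O.adj w x) (h2 : O.adj x y) (h3 : O.adj y z) (hwz : G.Adj w z) :
    O.adj w y ∧ O.adj x z := by
  have hdip : O.IsDipath ![w, x, y, z] := by
    intro i
    fin_cases i <;> simpa using ‹_›
  rcases hO.2 3 ![w, x, y, z] hdip with h | h
  · exact absurd hwz (by simpa using h)
  · refine ⟨?_, ?_⟩
    · simpa using h 0 2 (by decide)
    · simpa using h 1 3 (by decide)

/-- In a semi-transitively oriented graph, a 4-cycle `a b c d`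
that is not a `K₄`, with `a → b` and `b → c`, must have `a → d` and `d → c`. -/
theorem cycle_orientation_forced {V : Type*} [Fintype V] (G : SimpleGraph V)
    (O : G.Orientation) (hO : O.SemiTransitive) (a b c d : V)
    (hab' : a ≠ b) (hac' : a ≠ c) (had' : a ≠ d) (hbc' : b ≠ c) (hbd' : b ≠ d)
    (hcd' : c ≠ d)
    (hab : G.Adj a b) (hbc : G.Adj b c) (hcd : G.Adj c d) (hda : G.Adj d a)
    (oab : O.adj a b) (obc : O.adj b c)
    (hnotK4 : ¬ G.Adj a c ∨ ¬ G.Adj b d) :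
    O.adj a d ∧ O.adj d c := by
  have hoad : O.adj a d := by
    rcases O.choice hda.symm with h | h
    · exact h
    · -- d → a, so d → a → b → c with d,c adjacent
      have := path3_aux O hO d a b c h oab obc hcd.symm
      rcases hnotK4 with hac | hbd
      · exact absurd (O.adj_sub this.2) hac
      · exact absurd (O.adj_sub this.1).symm hbd
  have hodc : O.adj d c := by
    rcases O.choice hcd.symm with h | h
    · exact h
    · -- c → d, so a → b → c → d with a,d adjacent
      have := path3_aux O hO a b c d oab obc h hda.symm
      rcases hnotK4 with hac | hbd
      · exact absurd (O.adj_sub this.1) hac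
      · exact absurd (O.adj_sub this.2) hbd
  exact ⟨hoad, hodc⟩
end

section
/- For all integers k ≥ 1 and n with k ≤ n ≤ 2k+1, the Kneser graph K(n,k) is semi-transitive. -/
open Classical in
/-- A `3`-coloring of `k`-subsets of `Fin n`. -/
noncomputable def kcol {n : ℕ} (A : Finset (Fin n)) : ℕ :=
  if ∃ a ∈ A, (a : ℕ) = 0 then 0 else if ∃ a ∈ A, (a : ℕ) = 1 then 1 else 2

lemma kcol_lt_three {n : ℕ} (A : Finset (Fin n)) : kcol A < 3 := by
  unfold kcol
  split <;> [omega; skip]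
  split <;> omega

lemma kcol_proper {n k : ℕ} (hk : 1 ≤ k) (hn : n ≤ 2 * k + 1)
    (A B : Finset (Fin n)) (hA : A.card = k) (hB : B.card = k)
    (hd : Disjoint A B) : kcol A ≠ kcol B := by
  have hcard : (A ∪ B).card = 2 * k := by
    rw [Finset.card_union_of_disjoint hd, hA, hB]; omega
  have hun : 2 * k ≤ n := by
    have h := Finset.card_le_univ (A ∪ B)
    simpa [hcard] using h
  have hn2 : 2 ≤ n := by omega
  have key : ∀ m : ℕ, (∃ a ∈ A, (a : ℕ) = m) → (∃ b ∈ B, (b : ℕ) = m) → False := by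
    rintro m ⟨a, ha, ha'⟩ ⟨b, hb, hb'⟩
    have : a = b := Fin.ext (ha'.trans hb'.symm)
    exact Finset.disjoint_left.mp hd ha (this ▸ hb)
  have key2 : ¬ ((¬ ∃ a ∈ A, (a : ℕ) = 0) ∧ (¬ ∃ a ∈ A, (a : ℕ) = 1) ∧
      (¬ ∃ b ∈ B, (b : ℕ) = 0) ∧ (¬ ∃ b ∈ B, (b : ℕ) = 1)) := by
    rintro ⟨hA0, hA1, hB0, hB1⟩
    set x0 : Fin n := ⟨0, by omega⟩
    set x1 : Fin n := ⟨1, by omega⟩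
    have hx0 : x0 ∉ A ∪ B := by
      intro h
      rcases Finset.mem_union.mp h with h | h
      · exact hA0 ⟨x0, h, rfl⟩
      · exact hB0 ⟨x0, h, rfl⟩
    have hx1 : x1 ∉ A ∪ B := by
      intro h
      rcases Finset.mem_union.mp h with h | h
      · exact hA1 ⟨x1, h, rfl⟩
      · exact hB1 ⟨x1, h, rfl⟩
    have hne : x0 ≠ x1 := by
      intro h
      have := congrArg Fin.val h
      simp [x0, x1] at this
    have hx0' : x0 ∉ insert x1 (A ∪ B) := by
      simp only [Finset.mem_insert]
      rintro (h | h)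
      · exact hne h
      · exact hx0 h
    have hc : (insert x0 (insert x1 (A ∪ B))).card = 2 * k + 2 := by
      rw [Finset.card_insert_of_notMem hx0', Finset.card_insert_of_notMem hx1, hcard]
    have := Finset.card_le_univ (insert x0 (insert x1 (A ∪ B)))
    rw [hc] at this
    simp only [Finset.card_univ, Fintype.card_fin] at this
    omega
  unfold kcol
  by_cases hA0 : ∃ a ∈ A, (a : ℕ) = 0 <;> by_cases hB0 : ∃ b ∈ B, (b : ℕ) = 0 <;>
    by_cases hA1 : ∃ a ∈ A, (a : ℕ) = 1 <;> by_cases hB1 : ∃ b ∈ B, (b : ℕ) = 1 <;>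
    first
      | exact (key 0 hA0 hB0).elim
      | exact (key 1 hA1 hB1).elim
      | exact (key2 ⟨hA0, hA1, hB0, hB1⟩).elim
      | simp [hA0, hB0, hA1, hB1]


/-- For `k ≥ 1` and `k ≤ n ≤ 2k + 1`, `K(n,k)` is semi-transitive. -/
theorem kneser_semiTransitive_of_le (n k : ℕ) (hk : 1 ≤ k) (hkn : k ≤ n)
    (hn : n ≤ 2 * k + 1) : (kneserGraph n k).SemiTransitive := by
  classical
  set G := kneserGraph n k with hG
  have proper : ∀ {A B : {s : Finset (Fin n) // s.card = k}}, G.Adj A B →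
      kcol A.val ≠ kcol B.val := by
    intro A B hAB
    exact kcol_proper hk hn A.val B.val A.prop B.prop hAB.2
  refine ⟨⟨fun A B => G.Adj A B ∧ kcol A.val < kcol B.val, fun h => h.1, ?_, ?_⟩, ?_, ?_⟩
  · intro u v h
    rcases lt_or_gt_of_ne (proper h) with h' | h'
    · exact Or.inl ⟨h, h'⟩
    · exact Or.inr ⟨h.symm, h'⟩
  · intro u v h h'
    exact absurd h'.2 (Nat.lt_asymm h.2)
  · intro v hv
    have mono : ∀ a b : {s : Finset (Fin n) // s.card = k},
        (G.Adj a b ∧ kcol a.val < kcol b.val) → kcol a.val < kcol b.val := fun _ _ h => h.2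
    have htr : Relation.TransGen
        (fun a b : {s : Finset (Fin n) // s.card = k} => kcol a.val < kcol b.val) v v :=
      Relation.TransGen.mono mono _ _ hv
    haveI : IsTrans _ (fun a b : {s : Finset (Fin n) // s.card = k} => kcol a.val < kcol b.val) :=
      ⟨fun _ _ _ h1 h2 => lt_trans h1 h2⟩
    rw [Relation.transGen_eq_self
      (r := fun a b : {s : Finset (Fin n) // s.card = k} => kcol a.val < kcol b.val)] at htr
    exact lt_irrefl _ htr
  · intro m f hf
    have smono : StrictMono (fun i : Fin (m+1) => kcol (f i).val) := by
      rw [Fin.strictMono_iff_lt_succ]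
      intro i
      exact (hf i).2
    match m, f, hf, smono with
    | 0, f, hf, smono =>
      left
      intro hadj
      exact hadj.1 (congrArg f (Fin.ext (by simp)))
    | 1, f, hf, smono =>
      right
      intro i j hij
      refine ⟨?_, smono hij⟩
      have h01 : G.Adj (f 0) (f 1) := (hf 0).1
      fin_cases i <;> fin_cases j <;>
        first
          | exact absurd hij (by decide)
          | exact h01
    | 2, f, hf, smono =>
      by_cases hadj : G.Adj (f 0) (f (Fin.last 2))
      · right
        intro i j hij
        refine ⟨?_, smono hij⟩
        have h01 : G.Adj (f 0) (f 1) := (hf 0).1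
        have h12 : G.Adj (f 1) (f 2) := (hf 1).1
        have h02 : G.Adj (f 0) (f 2) := hadj
        fin_cases i <;> fin_cases j <;>
          first
            | exact absurd hij (by decide)
            | exact h01
            | exact h12
            | exact h02
      · exact Or.inl hadj
    | (m+3), f, hf, smono =>
      exfalso
      have h01 := smono (show (⟨0, by omega⟩ : Fin (m+4)) < ⟨1, by omega⟩ from Fin.mk_lt_mk.mpr (by omega))
      have h12 := smono (show (⟨1, by omega⟩ : Fin (m+4)) < ⟨2, by omega⟩ from Fin.mk_lt_mk.mpr (by omega))
      have h23 := smono (show (⟨2, by omega⟩ : Fin (m+4)) < ⟨3, by omega⟩ from Fin.mk_lt_mk.mpr (by omega))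
      have hb := kcol_lt_three (f ⟨3, by omega⟩).val
      simp only at h01 h12 h23
      omega
end

section
/- For every integer k ≥ 2, the Kneser graph K(6,2) is isomorphic to an induced subgraph of the Kneser graph K(15k−24, k). -/
namespace KneserEmbed

lemma key_div (d a b x y : ℕ) (hx : x < d) (hy : y < d) (h : a*d+x = b*d+y) : a = b ∧ x = y := by
  have hd : 0 < d := lt_of_le_of_lt (Nat.zero_le x) hx
  have ha : (x + a*d)/d = a := by
    rw [Nat.add_mul_div_right _ _ hd, Nat.div_eq_of_lt hx, Nat.zero_add]
  have hb : (y + b*d)/d = b := by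
    rw [Nat.add_mul_div_right _ _ hd, Nat.div_eq_of_lt hy, Nat.zero_add]
  have hab : a = b := by rw [← ha, ← hb]; congr 1; omega
  subst hab
  exact ⟨rfl, by omega⟩

noncomputable def pidx : {s : Finset (Fin 6) // s.card = 2} ≃ Fin 15 :=
  Fintype.equivFinOfCardEq (by rw [Fintype.card_finset_len]; rfl)

variable (k : ℕ) (hk : 2 ≤ k)

def embF (a : Fin 6) : Fin (15*k-24) := ⟨a.val, by omega⟩

lemma embF_inj : Function.Injective (embF k hk) := by
  intro a b h
  simpa [embF, Fin.ext_iff] using h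

noncomputable def privF (v : {s : Finset (Fin 6) // s.card = 2}) : Finset (Fin (15*k-24)) :=
  Finset.univ.image (fun x : Fin (k-2) =>
    (⟨6 + (pidx v).val * (k-2) + x.val, by
      have h1 := (pidx v).isLt
      have h2 := x.isLt
      have h3 : (pidx v).val * (k-2) ≤ 14*(k-2) := Nat.mul_le_mul_right _ (by omega)
      omega⟩ : Fin (15*k-24)))

lemma mem_privF {v a} : a ∈ privF k hk v ↔
    ∃ x : ℕ, x < k - 2 ∧ a.val = 6 + (pidx v).val * (k-2) + x := by
  simp only [privF, Finset.mem_image, Finset.mem_univ, true_and]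
  constructor
  · rintro ⟨x, rfl⟩; exact ⟨x.val, x.isLt, rfl⟩
  · rintro ⟨x, hx, h⟩
    exact ⟨⟨x, hx⟩, by simp [Fin.ext_iff, h.symm]⟩

lemma privF_ge6 {v a} (h : a ∈ privF k hk v) : 6 ≤ a.val := by
  obtain ⟨x, _, h⟩ := (mem_privF k hk).mp h; omega

lemma privF_card (v) : (privF k hk v).card = k - 2 := by
  rw [privF, Finset.card_image_of_injective _ ?_, Finset.card_univ, Fintype.card_fin]
  intro x y h
  simp only [Fin.ext_iff] at h ⊢
  omega

lemma privF_disj {u v} (h : u ≠ v) : Disjoint (privF k hk u) (privF k hk v) := by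
  rw [Finset.disjoint_left]
  intro a ha hb
  obtain ⟨x, hx, hax⟩ := (mem_privF k hk).mp ha
  obtain ⟨y, hy, hay⟩ := (mem_privF k hk).mp hb
  have heq : (pidx u).val * (k-2) + x = (pidx v).val * (k-2) + y := by omega
  have := (key_div _ _ _ _ _ hx hy heq).1
  exact h (pidx.injective (Fin.ext this))

noncomputable def Sv (v : {s : Finset (Fin 6) // s.card = 2}) : Finset (Fin (15*k-24)) :=
  v.val.image (embF k hk) ∪ privF k hk v

lemma mem_Sv_emb {v} (a : Fin 6) : embF k hk a ∈ Sv k hk v ↔ a ∈ v.val := by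
  simp only [Sv, Finset.mem_union, Finset.mem_image]
  constructor
  · rintro (⟨b, hb, h⟩ | h)
    · rwa [← embF_inj k hk h]
    · have := privF_ge6 k hk h
      simp [embF] at this
      omega
  · intro h; exact Or.inl ⟨a, h, rfl⟩

lemma Sv_card (v) : (Sv k hk v).card = k := by
  rw [Sv, Finset.card_union_of_disjoint, Finset.card_image_of_injective _ (embF_inj k hk),
    v.2, privF_card]
  · omega
  · rw [Finset.disjoint_left]
    rintro a ha hb
    obtain ⟨b, _, rfl⟩ := Finset.mem_image.mp ha
    have := privF_ge6 k hk hb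
    simp [embF] at this
    omega

lemma Sv_inj : Function.Injective (Sv k hk) := by
  intro u v h
  ext a
  rw [← mem_Sv_emb k hk a, ← mem_Sv_emb k hk a, h]

lemma Sv_disjoint_iff {u v} (huv : u ≠ v) :
    Disjoint (Sv k hk u) (Sv k hk v) ↔ Disjoint u.val v.val := by
  constructor
  · intro h
    rw [Finset.disjoint_left] at h ⊢
    intro a ha hb
    exact h ((mem_Sv_emb k hk a).mpr ha) ((mem_Sv_emb k hk a).mpr hb)
  · intro h
    rw [Finset.disjoint_left]
    intro a ha hb
    simp only [Sv, Finset.mem_union, Finset.mem_image] at ha hb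
    rcases ha with ⟨b, hbu, rfl⟩ | ha
    · rcases hb with ⟨c, hcv, hc⟩ | hb
      · rw [embF_inj k hk hc] at hcv
        exact Finset.disjoint_left.mp h hbu hcv
      · have := privF_ge6 k hk hb
        simp [embF] at this
        omega
    · rcases hb with ⟨c, hcv, hc⟩ | hb
      · have := privF_ge6 k hk ha
        rw [← hc] at this
        simp [embF] at this
        omega
      · exact Finset.disjoint_left.mp (privF_disj k hk huv) ha hb

end KneserEmbed

/-- For `k ≥ 2`, `K(6,2)` is isomorphic to an induced subgraph of
`K(15k − 24, k)`. -/
theorem kneser_6_2_embeds (k : ℕ) (hk : 2 ≤ k) :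
    ∃ S : Set {s : Finset (Fin (15 * k - 24)) // s.card = k},
      Nonempty ((kneserGraph 6 2) ≃g ((kneserGraph (15 * k - 24) k).induce S)) := by
  classical
  let F : {s : Finset (Fin 6) // s.card = 2} → {s : Finset (Fin (15*k-24)) // s.card = k} :=
    fun v => ⟨KneserEmbed.Sv k hk v, KneserEmbed.Sv_card k hk v⟩
  have hFinj : Function.Injective F := by
    intro u v h
    exact KneserEmbed.Sv_inj k hk (congrArg Subtype.val h)
  refine ⟨Set.range F, ⟨⟨Equiv.ofInjective F hFinj, ?_⟩⟩⟩
  intro u v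
  show (kneserGraph (15*k-24) k).Adj (F u) (F v) ↔ (kneserGraph 6 2).Adj u v
  constructor
  · rintro ⟨h1, h2⟩
    have huv : u ≠ v := fun h => h1 (congrArg F h)
    exact ⟨huv, (KneserEmbed.Sv_disjoint_iff k hk huv).mp h2⟩
  · rintro ⟨h1, h2⟩
    exact ⟨fun h => h1 (hFinj h), (KneserEmbed.Sv_disjoint_iff k hk h1).mpr h2⟩
end

section
/- For all integers k ≥ 1 and n with k ≤ n ≤ 2k, the complement graph of the Kneser graph K(n,k) is semi-transitive. -/
namespace KneserAux

def vv {n : ℕ} (s : Finset (Fin n)) : ℕ := Encodable.encode s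

lemma vv_inj {n : ℕ} : Function.Injective (vv (n := n)) := Encodable.encode_injective

def rk {n : ℕ} (s : Finset (Fin n)) : ℕ :=
  2 * min (vv s) (vv sᶜ) + (if vv s ≤ vv sᶜ then 0 else 1)

lemma ne_compl {n : ℕ} {s : Finset (Fin n)} (hs : s.Nonempty) : s ≠ sᶜ := by
  obtain ⟨x, hx⟩ := hs
  intro h
  have : x ∈ sᶜ := h ▸ hx
  exact (Finset.mem_compl.mp this) hx

lemma rk_inj {n : ℕ} {s t : Finset (Fin n)} (hs : s ≠ sᶜ) (ht : t ≠ tᶜ)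
    (h : rk s = rk t) : s = t := by
  have has : vv s ≠ vv sᶜ := fun h' => hs (vv_inj h')
  have hat : vv t ≠ vv tᶜ := fun h' => ht (vv_inj h')
  rcases lt_or_gt_of_ne has with h1 | h1 <;> rcases lt_or_gt_of_ne hat with h2 | h2 <;>
    simp only [rk, min_eq_left h1.le, min_eq_right h1.le, min_eq_left h2.le,
      min_eq_right h2.le, if_pos h1.le, if_pos h2.le, if_neg (not_le.mpr h1),
      if_neg (not_le.mpr h2)] at h
  · exact vv_inj (by omega)
  · omega
  · omega
  · have : sᶜ = tᶜ := vv_inj (by omega)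
    exact compl_injective this

lemma rk_compl_succ {n : ℕ} {s t : Finset (Fin n)} (hs : s ≠ sᶜ) (ht : t = sᶜ)
    (hlt : rk s < rk t) : rk t = rk s + 1 := by
  subst ht
  have has : vv s ≠ vv sᶜ := fun h' => hs (vv_inj h')
  rcases lt_or_gt_of_ne has with h1 | h1 <;>
    simp only [rk, compl_compl, min_eq_left h1.le, min_eq_right h1.le, min_comm,
      if_pos h1.le, if_neg (not_le.mpr h1)] at hlt ⊢ <;> omega

lemma compl_of_disjoint {n k : ℕ} (hn : n ≤ 2 * k) {s t : Finset (Fin n)}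
    (hsc : s.card = k) (htc : t.card = k) (hd : Disjoint s t) : t = sᶜ := by
  have hcard : (s ∪ t).card = 2 * k := by
    rw [Finset.card_union_of_disjoint hd, hsc, htc]; ring
  have hle : (s ∪ t).card ≤ n := by
    simpa using Finset.card_le_card (Finset.subset_univ (s ∪ t))
  have huniv : s ∪ t = Finset.univ := by
    apply Finset.eq_univ_of_card
    simp only [Fintype.card_fin]
    omega
  ext x
  simp only [Finset.mem_compl]
  constructor
  · intro hx hxs
    exact (Finset.disjoint_left.mp hd hxs) hx
  · intro hx
    have : x ∈ s ∪ t := huniv ▸ Finset.mem_univ x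
    rcases Finset.mem_union.mp this with h | h
    · exact absurd h hx
    · exact h

end KneserAux

/-- For `k ≥ 1` and `k ≤ n ≤ 2k`, the complement of `K(n,k)` is
semi-transitive. -/
theorem kneser_compl_semiTransitive (n k : ℕ) (hk : 1 ≤ k) (hkn : k ≤ n)
    (hn : n ≤ 2 * k) : ((kneserGraph n k)ᶜ).SemiTransitive := by
  classical
  set G := kneserGraph n k with hG
  -- every vertex is a nonempty set, hence not equal to its complement
  have hnec : ∀ A : {s : Finset (Fin n) // s.card = k}, A.val ≠ A.valᶜ := by
    intro A
    apply KneserAux.ne_compl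
    rw [← Finset.card_pos, A.property]; exact hk
  -- the orientation: follow increasing rank
  refine ⟨⟨fun A B => Gᶜ.Adj A B ∧ KneserAux.rk A.val < KneserAux.rk B.val,
      fun h => h.1, ?_, fun h h' => absurd h'.2 (not_lt.mpr h.2.le)⟩, ?_, ?_⟩
  · intro A B h
    have hne : A ≠ B := h.ne
    have : KneserAux.rk A.val ≠ KneserAux.rk B.val := by
      intro he
      exact hne (Subtype.ext (KneserAux.rk_inj (hnec A) (hnec B) he))
    rcases this.lt_or_gt with h' | h'
    · exact Or.inl ⟨h, h'⟩
    · exact Or.inr ⟨h.symm, h'⟩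
  · -- acyclic
    intro v hv
    have mono : ∀ {a b}, Relation.TransGen
        (fun A B => Gᶜ.Adj A B ∧ KneserAux.rk A.val < KneserAux.rk B.val) a b →
        KneserAux.rk a.val < KneserAux.rk b.val := by
      intro a b h
      induction h with
      | single h => exact h.2
      | tail _ h ih => exact ih.trans h.2
    exact absurd (mono hv) (lt_irrefl _)
  · -- semi-transitivity: in fact the second disjunct always holds
    intro m f hf
    right
    have hmono : StrictMono (fun i => KneserAux.rk (f i).val) := by
      rw [Fin.strictMono_iff_lt_succ]
      intro i
      exact (hf i).2
    intro i j hij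
    have hrklt : KneserAux.rk (f i).val < KneserAux.rk (f j).val := hmono hij
    have hne : f i ≠ f j := fun h => absurd (congrArg _ (congrArg _ h)) hrklt.ne
    refine ⟨?_, hrklt⟩
    rw [SimpleGraph.compl_adj]
    refine ⟨hne, ?_⟩
    rintro ⟨-, hdisj⟩
    -- then f j is the complement of f i, so their ranks are consecutive
    have hcompl : (f j).val = (f i).valᶜ :=
      KneserAux.compl_of_disjoint hn (f i).property (f j).property hdisj
    have hsucc : KneserAux.rk (f j).val = KneserAux.rk (f i).val + 1 :=
      KneserAux.rk_compl_succ (hnec (f i)) hcompl hrklt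
    -- i and j cannot be consecutive, since the path edge would give adjacency in Gᶜ
    have hival : (i : ℕ) < (j : ℕ) := hij
    have hjk : (j : ℕ) ≤ m := Nat.lt_succ_iff.mp j.isLt
    have hikm : (i : ℕ) < m := lt_of_lt_of_le hival hjk
    set p : Fin m := ⟨(i : ℕ), hikm⟩ with hp
    have hpc : p.castSucc = i := by ext; simp [hp]
    by_cases hcons : (j : ℕ) = (i : ℕ) + 1
    · -- consecutive : the path edge f i → f j is in Gᶜ, contradicting disjointness
      have hps : p.succ = j := by ext; simp [hp, hcons]
      have hedge := (hf p).1
      rw [hpc, hps] at hedge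
      exact hedge.2 ⟨hne, hdisj⟩
    · -- not consecutive : f (p.succ) has rank strictly between, contradiction
      have h1 : KneserAux.rk (f i).val < KneserAux.rk (f p.succ).val := by
        apply hmono
        rw [← hpc]
        exact Fin.castSucc_lt_succ
      have h2 : KneserAux.rk (f p.succ).val < KneserAux.rk (f j).val := by
        apply hmono
        rw [Fin.lt_def]
        simp only [Fin.val_succ, hp]
        omega
      omega
end

section
/- For all integers k ≥ 2 and n ≥ k, the complement graph of the Kneser graph K(n,k) is semi-transitive if and only if n ≤ 2k. -/
namespace KneserAux

variable {n k : ℕ}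

abbrev KV (n k : ℕ) := {s : Finset (Fin n) // s.card = k}

lemma adj_iff (u v : KV n k) :
    ((kneserGraph n k)ᶜ).Adj u v ↔ u ≠ v ∧ (u.val ∩ v.val).Nonempty := by
  rw [SimpleGraph.compl_adj]
  constructor
  · rintro ⟨hne, hnadj⟩
    refine ⟨hne, ?_⟩
    rw [Finset.nonempty_iff_ne_empty]
    intro hemp
    exact hnadj ⟨hne, Finset.disjoint_iff_inter_eq_empty.2 hemp⟩
  · rintro ⟨hne, hint⟩
    exact ⟨hne, fun h => by
      rw [Finset.disjoint_iff_inter_eq_empty.1 h.2] at hint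
      exact Finset.not_nonempty_empty hint⟩

lemma msymm {s t : Finset (Fin n)} (h : (s ∩ t).Nonempty) : (t ∩ s).Nonempty := by
  rwa [Finset.inter_comm]

section Easy
variable (n k : ℕ)

theorem easy (hk : 1 ≤ k) (hn2 : n ≤ 2 * k) : ((kneserGraph n k)ᶜ).SemiTransitive := by
  classical
  set N := Fintype.card (KV n k) with hN
  let e : KV n k ≃ Fin N := Fintype.equivFin _
  let mate : KV n k → KV n k := fun v =>
    if h : (Finset.univ \ v.val).card = k then ⟨Finset.univ \ v.val, h⟩ else v
  let M : KV n k → ℕ := fun v => min (e v).val (e (mate v)).val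
  let K : KV n k → ℕ := fun v => (e v).val + M v * N
  have hNpos : ∀ _ : KV n k, 0 < N := fun v => Fintype.card_pos_iff.2 ⟨v⟩
  have hKmod : ∀ v, K v % N = (e v).val := by
    intro v
    show ((e v).val + M v * N) % N = (e v).val
    rw [Nat.add_mul_mod_self_right]
    exact Nat.mod_eq_of_lt (e v).isLt
  have Kinj : ∀ u v : KV n k, K u = K v → u = v := by
    intro u v h
    have : (e u).val = (e v).val := by rw [← hKmod u, ← hKmod v, h]
    exact e.injective (Fin.ext this)
  have Mle : ∀ u v : KV n k, K u < K v → M u ≤ M v := by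
    intro u v h
    by_contra hlt
    push_neg at hlt
    have h1 : K v < (M v + 1) * N := by
      have := (e v).isLt
      show (e v).val + M v * N < (M v + 1) * N
      rw [Nat.add_mul, Nat.one_mul]
      omega
    have h2 : (M v + 1) * N ≤ M u * N := Nat.mul_le_mul_right _ hlt
    have h3 : M u * N ≤ K u := Nat.le_add_left _ _
    omega
  -- disjointness facts
  have mate_eq : ∀ u v : KV n k, Disjoint u.val v.val → mate u = v ∧ n = 2 * k := by
    intro u v hd
    have hcu : u.val.card = k := u.2
    have hcv : v.val.card = k := v.2
    have hcard : (u.val ∪ v.val).card = 2 * k := by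
      rw [Finset.card_union_of_disjoint hd, hcu, hcv]; omega
    have hle : (u.val ∪ v.val).card ≤ n := by
      simpa using Finset.card_le_card (Finset.subset_univ (u.val ∪ v.val))
    have hn2k : n = 2 * k := by omega
    have hsub : v.val ⊆ Finset.univ \ u.val := by
      rw [Finset.subset_sdiff]
      exact ⟨Finset.subset_univ _, hd.symm⟩
    have hcards : (Finset.univ \ u.val).card = k := by
      rw [Finset.card_sdiff_of_subset (Finset.subset_univ _), hcu]
      simp [hn2k]; omega
    have hveq : v.val = Finset.univ \ u.val :=
      Finset.eq_of_subset_of_card_le hsub (by omega)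
    constructor
    · show dite _ _ _ = v
      rw [dif_pos hcards]
      exact Subtype.ext hveq.symm
    · exact hn2k
  refine ⟨⟨fun u v => ((kneserGraph n k)ᶜ).Adj u v ∧ K u < K v,
      fun h => h.1, ?_, ?_⟩, ?_, ?_⟩
  · intro u v hadj
    rcases lt_or_gt_of_ne (fun h : K u = K v => hadj.ne (Kinj _ _ h)) with h | h
    · exact Or.inl ⟨hadj, h⟩
    · exact Or.inr ⟨hadj.symm, h⟩
  · rintro u v ⟨_, h1⟩ ⟨_, h2⟩
    omega
  · -- acyclic
    have mono : ∀ a b : KV n k, Relation.TransGen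
        (fun u v => ((kneserGraph n k)ᶜ).Adj u v ∧ K u < K v) a b → K a < K b := by
      intro a b h
      induction h with
      | single h => exact h.2
      | tail _ h ih => exact ih.trans h.2
    exact fun v hv => lt_irrefl _ (mono _ _ hv)
  · -- semi-transitivity
    intro m f hdip
    right
    have step : ∀ i : Fin m, K (f i.castSucc) < K (f i.succ) := fun i => (hdip i).2
    have mono : ∀ i j : Fin (m + 1), i < j → K (f i) < K (f j) := by
      intro i j hij
      rcases i with ⟨i, hi⟩
      rcases j with ⟨j, hj⟩
      have hij' : i < j := hij
      clear hij
      induction j with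
      | zero => omega
      | succ j ih =>
        have hj' : j < m + 1 := by omega
        have hstep : K (f ⟨j, hj'⟩) < K (f ⟨j + 1, hj⟩) := by
          have hjm : j < m := by omega
          have := step ⟨j, hjm⟩
          convert this using 3 <;> rfl
        rcases Nat.lt_or_ge i j with h | h
        · exact (ih hj' h).trans hstep
        · have : i = j := by omega
          subst this
          exact hstep
    intro i j hij
    have hKij := mono i j hij
    have hne : f i ≠ f j := fun h => lt_irrefl _ (h ▸ hKij)
    refine ⟨(adj_iff _ _).2 ⟨hne, ?_⟩, hKij⟩
    rw [Finset.nonempty_iff_ne_empty]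
    intro hemp
    have hd : Disjoint (f i).val (f j).val := Finset.disjoint_iff_inter_eq_empty.2 hemp
    -- derive contradiction
    have h1 := mate_eq _ _ hd
    have hn2k : n = 2 * k := h1.2
    have hmfi : mate (f i) = f j := h1.1
    have hmfj : mate (f j) = f i := (mate_eq _ _ hd.symm).1
    have mate_total : ∀ w : KV n k, (Finset.univ \ w.val).card = k := by
      intro w
      rw [Finset.card_sdiff_of_subset (Finset.subset_univ _), w.2]
      simp [hn2k]; omega
    have mate_mate : ∀ w : KV n k, mate (mate w) = w := by
      intro w
      show mate (dite _ _ _) = w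
      rw [dif_pos (mate_total w)]
      show dite _ _ _ = w
      rw [dif_pos (mate_total _)]
      apply Subtype.ext
      show Finset.univ \ (Finset.univ \ w.val) = w.val
      rw [Finset.sdiff_sdiff_self_left, Finset.univ_inter]
    -- j ≠ i + 1 case analysis
    rcases Nat.eq_or_lt_of_le (Nat.succ_le_of_lt (show i.val < j.val from hij)) with hj1 | hj1
    · -- consecutive: contradiction with adjacency of dipath
      have hjm : i.val < m := by omega
      have hadj := (hdip ⟨i.val, hjm⟩).1
      have hci : (⟨i.val, hjm⟩ : Fin m).castSucc = i := by simp [Fin.ext_iff]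
      have hsi : (⟨i.val, hjm⟩ : Fin m).succ = j := by simp [Fin.ext_iff]; omega
      rw [hci, hsi] at hadj
      rw [adj_iff] at hadj
      rw [Finset.disjoint_iff_inter_eq_empty.1 hd] at hadj
      exact Finset.not_nonempty_empty hadj.2
    · -- w strictly between
      set w := f ⟨i.val + 1, by omega⟩ with hw
      have hKw1 : K (f i) < K w := mono i ⟨i.val + 1, by omega⟩ (by simp [Fin.lt_def])
      have hKw2 : K w < K (f j) := mono ⟨i.val + 1, by omega⟩ j (by simp [Fin.lt_def]; omega)
      have hM1 : M (f i) ≤ M w := Mle _ _ hKw1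
      have hM2 : M w ≤ M (f j) := Mle _ _ hKw2
      have hMfi : M (f i) = min (e (f i)).val (e (f j)).val := by
        show min (e (f i)).val (e (mate (f i))).val = _
        rw [hmfi]
      have hMfj : M (f j) = min (e (f i)).val (e (f j)).val := by
        show min (e (f j)).val (e (mate (f j))).val = _
        rw [hmfj, Nat.min_comm]
      have hMw : M w = min (e (f i)).val (e (f j)).val := by omega
      have hwi : w ≠ f i := fun h => lt_irrefl _ (h ▸ hKw1)
      have hwj : w ≠ f j := fun h => lt_irrefl _ (h ▸ hKw2)
      -- M w is either (e w).val or (e (mate w)).val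
      have hcases : (e w).val = min (e (f i)).val (e (f j)).val ∨
          (e (mate w)).val = min (e (f i)).val (e (f j)).val := by
        rcases Nat.le_total (e w).val (e (mate w)).val with h | h
        · left; rw [← hMw]; exact (Nat.min_eq_left h).symm ▸ rfl
        · right; rw [← hMw]; exact (Nat.min_eq_right h).symm ▸ rfl
      have emin : ∀ x : KV n k, (e x).val = min (e (f i)).val (e (f j)).val →
          x = f i ∨ x = f j := by
        intro x hx
        rcases Nat.le_total (e (f i)).val (e (f j)).val with h | h
        · rw [Nat.min_eq_left h] at hx
          exact Or.inl (e.injective (Fin.ext hx))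
        · rw [Nat.min_eq_right h] at hx
          exact Or.inr (e.injective (Fin.ext hx))
      rcases hcases with hc | hc
      · rcases emin _ hc with h | h
        · exact hwi h
        · exact hwj h
      · rcases emin _ hc with h | h
        · have : w = mate (f i) := by rw [← h, mate_mate]
          rw [hmfi] at this
          exact hwj this
        · have : w = mate (f j) := by rw [← h, mate_mate]
          rw [hmfj] at this
          exact hwi this

end Easy

theorem hard (hk : 2 ≤ k) (hn : 2 * k + 1 ≤ n) : ¬ ((kneserGraph n k)ᶜ).SemiTransitive := by
  classical
  rintro ⟨O, hAc, hST⟩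
  set N := Fintype.card (KV n k) with hN
  let e : KV n k ≃ Fin N := Fintype.equivFin _
  let anc : KV n k → Finset (KV n k) :=
    fun v => Finset.univ.filter (fun u => Relation.TransGen O.adj u v)
  let Kh : KV n k → ℕ := fun v => (e v).val + (anc v).card * N
  have hKmod : ∀ v, Kh v % N = (e v).val := by
    intro v
    show ((e v).val + (anc v).card * N) % N = (e v).val
    rw [Nat.add_mul_mod_self_right]
    exact Nat.mod_eq_of_lt (e v).isLt
  have Khinj : ∀ u v : KV n k, Kh u = Kh v → u = v := by
    intro u v h
    have : (e u).val = (e v).val := by rw [← hKmod u, ← hKmod v, h]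
    exact e.injective (Fin.ext this)
  have Khmono : ∀ u v : KV n k, Relation.TransGen O.adj u v → Kh u < Kh v := by
    intro u v h
    have hsub : anc u ⊆ anc v := by
      intro w hw
      rw [Finset.mem_filter] at hw ⊢
      exact ⟨Finset.mem_univ _, hw.2.trans h⟩
    have hu : u ∈ anc v := Finset.mem_filter.2 ⟨Finset.mem_univ _, h⟩
    have hu' : u ∉ anc u := by
      rw [Finset.mem_filter]
      rintro ⟨-, hc⟩
      exact hAc u hc
    have hlt : (anc u).card < (anc v).card :=
      Finset.card_lt_card (Finset.ssubset_iff_of_subset hsub |>.2 ⟨u, hu, hu'⟩)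
    have h1 : Kh u < ((anc u).card + 1) * N := by
      have := (e u).isLt
      show (e u).val + (anc u).card * N < ((anc u).card + 1) * N
      rw [Nat.add_mul, Nat.one_mul]; omega
    have h2 : ((anc u).card + 1) * N ≤ (anc v).card * N := Nat.mul_le_mul_right _ hlt
    have h3 : (anc v).card * N ≤ Kh v := Nat.le_add_left _ _
    omega
  have mkadj : ∀ u v : KV n k, (u.val ∩ v.val).Nonempty → Kh u < Kh v → O.adj u v := by
    intro u v hm hlt
    have hne : u ≠ v := fun h => lt_irrefl _ (h ▸ hlt)
    rcases O.choice ((adj_iff u v).2 ⟨hne, hm⟩) with h | h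
    · exact h
    · exact absurd (Khmono _ _ (Relation.TransGen.single h)) (by omega)
  -- the core violation lemma
  have vio : ∀ a b c d : KV n k, Kh a < Kh b → Kh b < Kh c → Kh c < Kh d →
      (a.val ∩ b.val).Nonempty → (b.val ∩ c.val).Nonempty → (c.val ∩ d.val).Nonempty →
      (a.val ∩ d.val).Nonempty →
      (Disjoint a.val c.val ∨ Disjoint b.val d.val) → False := by
    intro a b c d o1 o2 o3 m1 m2 m3 m4 hd
    let f : Fin 4 → KV n k := ![a, b, c, d]
    have hdip : O.IsDipath f := by
      intro i
      fin_cases i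
      · exact mkadj a b m1 o1
      · exact mkadj b c m2 o2
      · exact mkadj c d m3 o3
    rcases hST 3 f hdip with h | h
    · exact h ((adj_iff a d).2 ⟨fun hh => lt_irrefl _ (hh ▸ (o1.trans (o2.trans o3))), m4⟩)
    · rcases hd with hd | hd
      · have := O.adj_sub (h 0 2 (by decide))
        rw [adj_iff] at this
        rcases this.2 with ⟨x, hx⟩
        rw [Finset.mem_inter] at hx
        exact Finset.disjoint_left.1 hd hx.1 hx.2
      · have := O.adj_sub (h 1 3 (by decide))
        rw [adj_iff] at this
        rcases this.2 with ⟨x, hx⟩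
        rw [Finset.mem_inter] at hx
        exact Finset.disjoint_left.1 hd hx.1 hx.2
  -- the window
  obtain ⟨S₀, -, hS₀⟩ := Finset.exists_subset_card_eq
    (show 2 * k + 1 ≤ (Finset.univ : Finset (Fin n)).card by simpa using hn)
  let Wf : Finset (KV n k) := Finset.univ.filter (fun v => v.val ⊆ S₀)
  have hWne : Wf.Nonempty := by
    obtain ⟨B0, hB0sub, hB0card⟩ := Finset.exists_subset_card_eq
      (show k ≤ S₀.card by omega)
    exact ⟨⟨B0, hB0card⟩, Finset.mem_filter.2 ⟨Finset.mem_univ _, hB0sub⟩⟩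
  obtain ⟨B, hBW, hBmax⟩ := Finset.exists_max_image Wf Kh hWne
  have hBtop : ∀ x ∈ Wf, x ≠ B → Kh x < Kh B := fun x hx hne =>
    lt_of_le_of_ne (hBmax x hx) (fun h => hne (Khinj _ _ h))
  have hBsub : B.val ⊆ S₀ := (Finset.mem_filter.1 hBW).2
  set Q : Finset (Fin n) := S₀ \ B.val with hQdef
  have hQcard : Q.card = k + 1 := by
    rw [hQdef, Finset.card_sdiff_of_subset hBsub, hS₀, B.2]; omega
  have hQB : Disjoint Q B.val := Finset.sdiff_disjoint
  have hQS : Q ⊆ S₀ := Finset.sdiff_subset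
  -- partners
  let PV : {q // q ∈ Q} → KV n k := fun q =>
    ⟨Q.erase q.1, by rw [Finset.card_erase_of_mem q.2, hQcard]; omega⟩
  have hPVW : ∀ q, PV q ∈ Wf := fun q =>
    Finset.mem_filter.2 ⟨Finset.mem_univ _, (Q.erase_subset _).trans hQS⟩
  have dPB : ∀ q, Disjoint (PV q).val B.val :=
    fun q => Finset.disjoint_of_subset_left (Q.erase_subset _) hQB
  have hPV_ne_B : ∀ q, PV q ≠ B := by
    intro q h
    have hne : (PV q).val.Nonempty := Finset.card_pos.1 (by rw [(PV q).2]; omega)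
    rcases hne with ⟨x, hx⟩
    have hxB : x ∈ B.val := by rw [← h]; exact hx
    exact Finset.disjoint_left.1 (dPB q) hx hxB
  have hPVltB : ∀ q, Kh (PV q) < Kh B := fun q => hBtop _ (hPVW q) (hPV_ne_B q)
  have PVinj : ∀ a b : {q // q ∈ Q}, Kh (PV a) = Kh (PV b) → a = b := by
    intro a b h
    have hval : Q.erase a.1 = Q.erase b.1 := congrArg Subtype.val (Khinj _ _ h)
    apply Subtype.ext
    by_contra hne
    have : a.1 ∈ Q.erase b.1 := Finset.mem_erase.2 ⟨hne, a.2⟩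
    rw [← hval] at this
    exact (Finset.mem_erase.1 this).1 rfl
  have hthird : ∀ x y : Fin n, ∃ z ∈ Q, z ≠ x ∧ z ≠ y := by
    intro x y
    by_contra hc
    push_neg at hc
    have hsub : Q ⊆ insert x {y} := by
      intro z hz
      by_cases hzx : z = x
      · simp [hzx]
      · simp [hc z hz hzx]
    have := Finset.card_le_card hsub
    have hle : (insert x ({y} : Finset (Fin n))).card ≤ 2 :=
      (Finset.card_insert_le _ _).trans (by simp)
    omega
  have mPP : ∀ a b : {q // q ∈ Q}, a.1 ≠ b.1 →
      ((PV a).val ∩ (PV b).val).Nonempty := by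
    intro a b hab
    obtain ⟨z, hzQ, hza, hzb⟩ := hthird a.1 b.1
    exact ⟨z, Finset.mem_inter.2 ⟨Finset.mem_erase.2 ⟨hza, hzQ⟩, Finset.mem_erase.2 ⟨hzb, hzQ⟩⟩⟩
  -- the X sets
  let XV : {q // q ∈ Q} → {b // b ∈ B.val} → KV n k := fun q b =>
    ⟨insert q.1 (B.val.erase b.1), by
      rw [Finset.card_insert_of_notMem (fun hmem =>
        Finset.disjoint_left.1 hQB q.2 (Finset.mem_of_mem_erase hmem)),
        Finset.card_erase_of_mem b.2, B.2]
      omega⟩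
  have hXW : ∀ q b, XV q b ∈ Wf := by
    intro q b
    refine Finset.mem_filter.2 ⟨Finset.mem_univ _, ?_⟩
    intro x hx
    rcases Finset.mem_insert.1 hx with h | h
    · exact hQS (h ▸ q.2)
    · exact hBsub (Finset.mem_of_mem_erase h)
  have mXB : ∀ q b, ((XV q b).val ∩ B.val).Nonempty := by
    intro q b
    have : (B.val.erase b.1).Nonempty := Finset.card_pos.1 (by
      rw [Finset.card_erase_of_mem b.2, B.2]; omega)
    rcases this with ⟨x, hx⟩
    exact ⟨x, Finset.mem_inter.2 ⟨Finset.mem_insert_of_mem hx, Finset.mem_of_mem_erase hx⟩⟩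
  have mXP : ∀ (q q' : {q // q ∈ Q}) (b : {b // b ∈ B.val}), q.1 ≠ q'.1 →
      ((XV q b).val ∩ (PV q').val).Nonempty := by
    intro q q' b hne
    exact ⟨q.1, Finset.mem_inter.2 ⟨Finset.mem_insert_self _ _,
      Finset.mem_erase.2 ⟨hne, q.2⟩⟩⟩
  have dXP : ∀ q b, Disjoint (XV q b).val (PV q).val := by
    intro q b
    rw [Finset.disjoint_left]
    intro x hx hx'
    rcases Finset.mem_insert.1 hx with h | h
    · exact (Finset.mem_erase.1 hx').1 (by rw [h])
    · exact Finset.disjoint_left.1 hQB (Finset.mem_of_mem_erase hx')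
        (Finset.mem_of_mem_erase h)
  have hX_ne_B : ∀ q b, XV q b ≠ B := by
    intro q b h
    have : q.1 ∈ B.val := by
      rw [← h]
      exact Finset.mem_insert_self _ _
    exact Finset.disjoint_left.1 hQB q.2 this
  have XltB : ∀ q b, Kh (XV q b) < Kh B := fun q b => hBtop _ (hXW q b) (hX_ne_B q b)
  have hX_ne_P : ∀ q b q', XV q b ≠ PV q' := by
    intro q b q' h
    rcases mXB q b with ⟨x, hx⟩
    rw [Finset.mem_inter] at hx
    have := hx.1
    rw [h] at this
    exact Finset.disjoint_left.1 (dPB q') this hx.2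
  -- choose q0 q1 qk qk1
  have hQne : Q.attach.Nonempty := by
    rw [Finset.attach_nonempty_iff]
    exact Finset.card_pos.1 (by omega)
  obtain ⟨q0, -, hq0min⟩ := Finset.exists_min_image Q.attach (fun q => Kh (PV q)) hQne
  obtain ⟨qk, -, hqkmax⟩ := Finset.exists_max_image Q.attach (fun q => Kh (PV q)) hQne
  have hq0min' : ∀ a : {q // q ∈ Q}, Kh (PV q0) ≤ Kh (PV a) :=
    fun a => hq0min a (Finset.mem_attach _ _)
  have hqkmax' : ∀ a : {q // q ∈ Q}, Kh (PV a) ≤ Kh (PV qk) :=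
    fun a => hqkmax a (Finset.mem_attach _ _)
  have hE0ne : (Q.erase q0.1).attach.Nonempty := by
    rw [Finset.attach_nonempty_iff]
    apply Finset.card_pos.1
    rw [Finset.card_erase_of_mem q0.2, hQcard]; omega
  have hEkne : (Q.erase qk.1).attach.Nonempty := by
    rw [Finset.attach_nonempty_iff]
    apply Finset.card_pos.1
    rw [Finset.card_erase_of_mem qk.2, hQcard]; omega
  obtain ⟨q1', -, hq1min⟩ := Finset.exists_min_image (Q.erase q0.1).attach
    (fun x => Kh (PV ⟨x.1, Finset.mem_of_mem_erase x.2⟩)) hE0ne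
  obtain ⟨qk1', -, hqk1max⟩ := Finset.exists_max_image (Q.erase qk.1).attach
    (fun x => Kh (PV ⟨x.1, Finset.mem_of_mem_erase x.2⟩)) hEkne
  set q1 : {q // q ∈ Q} := ⟨q1'.1, Finset.mem_of_mem_erase q1'.2⟩ with hq1def
  set qk1 : {q // q ∈ Q} := ⟨qk1'.1, Finset.mem_of_mem_erase qk1'.2⟩ with hqk1def
  have hq1min' : ∀ a : {q // q ∈ Q}, a.1 ≠ q0.1 → Kh (PV q1) ≤ Kh (PV a) := by
    intro a ha
    have := hq1min ⟨a.1, Finset.mem_erase.2 ⟨ha, a.2⟩⟩ (Finset.mem_attach _ _)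
    exact this
  have hqk1max' : ∀ a : {q // q ∈ Q}, a.1 ≠ qk.1 → Kh (PV a) ≤ Kh (PV qk1) := by
    intro a ha
    have := hqk1max ⟨a.1, Finset.mem_erase.2 ⟨ha, a.2⟩⟩ (Finset.mem_attach _ _)
    exact this
  have hq1ne0 : q1.1 ≠ q0.1 := (Finset.mem_erase.1 q1'.2).1
  have hqk1nek : qk1.1 ≠ qk.1 := (Finset.mem_erase.1 qk1'.2).1
  have ho01 : Kh (PV q0) < Kh (PV q1) :=
    lt_of_le_of_ne (hq0min' q1) (fun h => hq1ne0 (congrArg Subtype.val (PVinj _ _ h.symm) ▸ rfl))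
  
  have ho1k : Kh (PV q1) < Kh (PV qk) := by
    -- q1 ≠ qk via a third element
    obtain ⟨z, hzQ, hz0, hz1⟩ := hthird q0.1 q1.1
    have hq1nek : q1.1 ≠ qk.1 := by
      intro h
      have he : PV q1 = PV qk := by
        apply Subtype.ext
        show Q.erase q1.1 = Q.erase qk.1
        rw [h]
      have h1 : Kh (PV ⟨z, hzQ⟩) ≤ Kh (PV q1) := by
        rw [he]; exact hqkmax' _
      have h2 : Kh (PV q1) ≤ Kh (PV ⟨z, hzQ⟩) := hq1min' ⟨z, hzQ⟩ hz0
      have heq : (⟨z, hzQ⟩ : {q // q ∈ Q}) = q1 := PVinj _ _ (by omega)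
      exact hz1 (congrArg Subtype.val heq)
    exact lt_of_le_of_ne (hqkmax' q1)
      (fun h => hq1nek (congrArg Subtype.val (PVinj _ _ h)))
  have hq1nek : q1.1 ≠ qk.1 := by
    intro h
    have : PV q1 = PV qk := by
      apply Subtype.ext; show Q.erase q1.1 = Q.erase qk.1; rw [h]
    rw [this] at ho1k
    omega
  have hq0nek : q0.1 ≠ qk.1 := by
    intro h
    have he : PV q0 = PV qk := by
      apply Subtype.ext; show Q.erase q0.1 = Q.erase qk.1; rw [h]
    have h2 := ho01.trans ho1k
    rw [he] at h2
    omega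
  
  have ho1k1 : Kh (PV q1) ≤ Kh (PV qk1) := hqk1max' q1 hq1nek
  have hok1k : Kh (PV qk1) < Kh (PV qk) :=
    lt_of_le_of_ne (hqkmax' qk1) (fun h => hqk1nek (congrArg Subtype.val (PVinj _ _ h)))
  have hq0nek1 : q0.1 ≠ qk1.1 := by
    intro h
    have he : PV q0 = PV qk1 := by
      apply Subtype.ext; show Q.erase q0.1 = Q.erase qk1.1; rw [h]
    have h2 := ho01.trans_le ho1k1
    rw [he] at h2
    omega
  -- a fixed element of B
  have hBne : B.val.Nonempty := Finset.card_pos.1 (by rw [B.2]; omega)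
  obtain ⟨b₀v, hb₀v⟩ := hBne
  let b₀ : {b // b ∈ B.val} := ⟨b₀v, hb₀v⟩
  -- W1 instance: P q0 ≺ X q1 b for every b
  have Y1pos : ∀ b : {b // b ∈ B.val}, Kh (PV q0) < Kh (XV q1 b) := by
    intro b
    rcases lt_trichotomy (Kh (PV q0)) (Kh (XV q1 b)) with h | h | h
    · exact h
    · exact absurd (Khinj _ _ h) (fun he => hX_ne_P q1 b q0 he.symm)
    · exact absurd (vio (XV q1 b) (PV q0) (PV q1) (PV qk) h ho01 ho1k
        (mXP q1 q0 b hq1ne0) (mPP q0 q1 (fun hh => hq1ne0 hh.symm))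
        (mPP q1 qk hq1nek) (mXP q1 qk b hq1nek)
        (Or.inl (dXP q1 b))) (fun hf => hf)
  -- W2 : sets meeting both P q0 and B are above P q0
  have W2 : ∀ D : KV n k, (D.val ∩ (PV q0).val).Nonempty →
      (D.val ∩ B.val).Nonempty → Kh (PV q0) < Kh D := by
    intro D hm1 hm2
    rcases lt_trichotomy (Kh (PV q0)) (Kh D) with h | h | h
    · exact h
    · exfalso
      have he := Khinj _ _ h
      rcases hm2 with ⟨x, hx⟩
      rw [Finset.mem_inter] at hx
      rw [← he] at hx
      exact Finset.disjoint_left.1 (dPB q0) hx.1 hx.2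
    · exact absurd (vio D (PV q0) (XV q1 b₀) B h (Y1pos b₀) (XltB q1 b₀)
        hm1 (msymm (mXP q1 q0 b₀ hq1ne0)) (mXB q1 b₀) hm2
        (Or.inr (dPB q0))) (fun hf => hf)
  -- Y1 below P qk
  have Y1ltPk : ∀ b : {b // b ∈ B.val}, Kh (XV q1 b) < Kh (PV qk) := by
    intro b
    rcases lt_trichotomy (Kh (XV q1 b)) (Kh (PV qk)) with h | h | h
    · exact h
    · exact absurd (Khinj _ _ h) (hX_ne_P q1 b qk)
    · exact absurd (vio (PV q0) (PV q1) (PV qk) (XV q1 b) ho01 ho1k h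
        (mPP q0 q1 (fun hh => hq1ne0 hh.symm)) (mPP q1 qk hq1nek)
        (msymm (mXP q1 qk b hq1nek)) (msymm (mXP q1 q0 b hq1ne0))
        (Or.inr (dXP q1 b).symm)) (fun hf => hf)
  -- W3 : nothing between P qk and B meets both
  have W3 : ∀ Wv : KV n k, Kh (PV qk) < Kh Wv → Kh Wv < Kh B →
      ¬((Wv.val ∩ (PV qk).val).Nonempty ∧ (Wv.val ∩ B.val).Nonempty) := by
    rintro Wv h1 h2 ⟨hm1, hm2⟩
    exact vio (XV q1 b₀) (PV qk) Wv B (Y1ltPk b₀) h1 h2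
      (mXP q1 qk b₀ hq1nek) (msymm hm1) hm2 (mXB q1 b₀)
      (Or.inr (dPB qk))
  -- W4 : P qk1 ≺ X qk b
  have W4 : ∀ b : {b // b ∈ B.val}, Kh (PV qk1) < Kh (XV qk b) := by
    intro b
    have step1 : Kh (PV q0) < Kh (XV qk b) :=
      W2 (XV qk b) (mXP qk q0 b (fun hh => hq0nek hh.symm)) (mXB qk b)
    rcases lt_trichotomy (Kh (PV qk1)) (Kh (XV qk b)) with h | h | h
    · exact h
    · exact absurd (Khinj _ _ h).symm (fun hh => hX_ne_P qk b qk1 hh)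
    · exact absurd (vio (PV q0) (XV qk b) (PV qk1) (PV qk) step1 h hok1k
        (msymm (mXP qk q0 b (fun hh => hq0nek hh.symm)))
        (mXP qk qk1 b (fun hh => hqk1nek hh.symm))
        (mPP qk1 qk hqk1nek) (mPP q0 qk hq0nek)
        (Or.inr (dXP qk b))) (fun hf => hf)
  -- W5 : X q0 b ≺ P q1
  have W5 : ∀ b : {b // b ∈ B.val}, Kh (XV q0 b) < Kh (PV q1) := by
    intro b
    have hXPk : Kh (XV q0 b) < Kh (PV qk) := by
      rcases lt_trichotomy (Kh (XV q0 b)) (Kh (PV qk)) with h | h | h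
      · exact h
      · exact absurd (Khinj _ _ h) (hX_ne_P q0 b qk)
      · exact absurd (W3 (XV q0 b) h (XltB q0 b)
          ⟨msymm (msymm (mXP q0 qk b hq0nek)), mXB q0 b⟩) (fun hf => hf)
    rcases lt_trichotomy (Kh (XV q0 b)) (Kh (PV q1)) with h | h | h
    · exact h
    · exact absurd (Khinj _ _ h) (hX_ne_P q0 b q1)
    · exact absurd (vio (PV q0) (PV q1) (XV q0 b) (PV qk) ho01 h hXPk
        (mPP q0 q1 (fun hh => hq1ne0 hh.symm))
        (msymm (mXP q0 q1 b (fun hh => hq1ne0 hh.symm))) (mXP q0 qk b hq0nek)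
        (mPP q0 qk hq0nek)
        (Or.inl (dXP q0 b).symm)) (fun hf => hf)
  
  -- final contradiction, split on k = 2 vs k ≥ 3
  rcases eq_or_lt_of_le hk with hk2 | hk3
  · -- k = 2
    have hB2 : B.val.card = 2 := by rw [B.2]; omega
    obtain ⟨x, y, hxy, hBxy⟩ := Finset.card_eq_two.1 hB2
    have hxB : x ∈ B.val := by rw [hBxy]; exact Finset.mem_insert_self _ _
    have hyB : y ∈ B.val := by rw [hBxy]; simp
    let b : {b // b ∈ B.val} := ⟨x, hxB⟩
    let b' : {b // b ∈ B.val} := ⟨y, hyB⟩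
    -- q1 = qk1 since Q has only 3 elements
    have hq1k1 : q1 = qk1 := by
      by_contra hne
      have hneval : q1.1 ≠ qk1.1 := fun h => hne (Subtype.ext h)
      have hsub : insert q0.1 (insert q1.1 (insert qk.1 ({qk1.1} : Finset (Fin n)))) ⊆ Q := by
        intro z hz
        simp only [Finset.mem_insert, Finset.mem_singleton] at hz
        rcases hz with h | h | h | h
        · exact h ▸ q0.2
        · exact h ▸ q1.2
        · exact h ▸ qk.2
        · exact h ▸ qk1.2
      have hcard4 : (insert q0.1 (insert q1.1 (insert qk.1 ({qk1.1} : Finset (Fin n))))).card = 4 := by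
        rw [Finset.card_insert_of_notMem, Finset.card_insert_of_notMem,
          Finset.card_insert_of_notMem, Finset.card_singleton]
        · simp only [Finset.mem_singleton]
          exact fun h => hqk1nek h.symm
        · simp only [Finset.mem_insert, Finset.mem_singleton]
          push_neg
          exact ⟨hq1nek, hneval⟩
        · simp only [Finset.mem_insert, Finset.mem_singleton]
          push_neg
          exact ⟨fun h => hq1ne0 h.symm, hq0nek, hq0nek1⟩
      have := Finset.card_le_card hsub
      omega
    have hBex : B.val.erase x = {y} := by
      rw [hBxy, Finset.erase_insert (by simp [hxy])]
    have hBey : B.val.erase y = {x} := by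
      rw [hBxy, Finset.pair_comm, Finset.erase_insert (by
        simp only [Finset.mem_singleton]
        exact fun h => hxy h.symm)]
    have dU12 : Disjoint (XV q0 b).val (XV qk b').val := by
      show Disjoint (insert q0.1 (B.val.erase x)) (insert qk.1 (B.val.erase y))
      rw [hBex, hBey, Finset.disjoint_left]
      intro z hz hz'
      simp only [Finset.mem_insert, Finset.mem_singleton] at hz hz'
      rcases hz with h | h <;> rcases hz' with h' | h'
      · exact hq0nek (h.symm.trans h')
      · exact Finset.disjoint_left.1 hQB q0.2 (by rw [← h, h']; exact hxB)
      · exact Finset.disjoint_left.1 hQB qk.2 (by rw [← h', h]; exact hyB)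
      · exact hxy (h'.symm.trans h)
    have hPk1 : Kh (PV q1) < Kh (XV qk b') := by
      have := W4 b'
      rw [← hq1k1] at this
      exact this
    exact vio (XV q0 b) (PV q1) (XV qk b') B (W5 b) hPk1 (XltB qk b')
      (mXP q0 q1 b (fun hh => hq1ne0 hh.symm))
      (msymm (mXP qk q1 b' (fun hh => hq1nek hh.symm)))
      (mXB qk b') (mXB q0 b)
      (Or.inl dU12)
  · -- k ≥ 3
    have hk3' : 3 ≤ k := hk3
    set UQ : Finset (Fin n) := (Q.erase q0.1).erase qk.1 with hUQdef
    have hqkmem : qk.1 ∈ Q.erase q0.1 := Finset.mem_erase.2 ⟨fun h => hq0nek h.symm, qk.2⟩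
    have hUQcard : UQ.card = k - 1 := by
      rw [hUQdef, Finset.card_erase_of_mem hqkmem, Finset.card_erase_of_mem q0.2, hQcard]
      omega
    have hUQQ : UQ ⊆ Q := ((Q.erase q0.1).erase_subset _).trans (Q.erase_subset _)
    have hbUQ : b₀v ∉ UQ := fun h => Finset.disjoint_left.1 hQB (hUQQ h) hb₀v
    let U : KV n k := ⟨insert b₀v UQ, by
      rw [Finset.card_insert_of_notMem hbUQ, hUQcard]; omega⟩
    have hUW : U ∈ Wf := by
      refine Finset.mem_filter.2 ⟨Finset.mem_univ _, ?_⟩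
      intro z hz
      rcases Finset.mem_insert.1 hz with h | h
      · exact hBsub (h ▸ hb₀v)
      · exact hQS (hUQQ h)
    have hUQne : ∀ a : Fin n, ∃ z ∈ UQ, z ≠ a := by
      intro a
      by_contra hc
      push_neg at hc
      have hsub : UQ ⊆ {a} := fun z hz => Finset.mem_singleton.2 (hc z hz)
      have := Finset.card_le_card hsub
      rw [hUQcard, Finset.card_singleton] at this
      omega
    have mUB : (U.val ∩ B.val).Nonempty :=
      ⟨b₀v, Finset.mem_inter.2 ⟨Finset.mem_insert_self _ _, hb₀v⟩⟩
    have mUP : ∀ a : {q // q ∈ Q}, (U.val ∩ (PV a).val).Nonempty := by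
      intro a
      obtain ⟨z, hzUQ, hza⟩ := hUQne a.1
      exact ⟨z, Finset.mem_inter.2 ⟨Finset.mem_insert_of_mem hzUQ,
        Finset.mem_erase.2 ⟨hza, hUQQ hzUQ⟩⟩⟩
    have hU_ne_B : U ≠ B := by
      intro h
      obtain ⟨z, hzUQ, -⟩ := hUQne b₀v
      have : z ∈ B.val := by
        rw [← h]
        exact Finset.mem_insert_of_mem hzUQ
      exact Finset.disjoint_left.1 hQB (hUQQ hzUQ) this
    have hUltB : Kh U < Kh B := hBtop U hUW hU_ne_B
    have hU_ne_P : ∀ q', U ≠ PV q' := by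
      intro q' h
      rcases mUB with ⟨z, hz⟩
      rw [Finset.mem_inter] at hz
      have := hz.1
      rw [h] at this
      exact Finset.disjoint_left.1 (dPB q') this hz.2
    have dUX : ∀ qq : {q // q ∈ Q}, qq.1 ∉ UQ → Disjoint U.val (XV qq b₀).val := by
      intro qq hqq
      rw [Finset.disjoint_left]
      intro z hz hz'
      rcases Finset.mem_insert.1 hz with h | h
      · rcases Finset.mem_insert.1 hz' with h' | h'
        · exact Finset.disjoint_left.1 hQB qq.2 (by rw [← h', h]; exact hb₀v)
        · exact (Finset.mem_erase.1 h').1 (h ▸ rfl)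
      · rcases Finset.mem_insert.1 hz' with h' | h'
        · exact hqq (h' ▸ h)
        · exact Finset.disjoint_left.1 hQB (hUQQ h) (Finset.mem_of_mem_erase h')
    have hq0notUQ : q0.1 ∉ UQ := fun h => (Finset.mem_erase.1 (Finset.mem_of_mem_erase h)).1 rfl
    have hqknotUQ : qk.1 ∉ UQ := fun h => (Finset.mem_erase.1 h).1 rfl
    have dUX0 : Disjoint U.val (XV q0 b₀).val := dUX q0 hq0notUQ
    have dUXk : Disjoint U.val (XV qk b₀).val := dUX qk hqknotUQ
    have step1 : Kh (PV q0) < Kh U := W2 U (mUP q0) mUB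
    have step2 : Kh U < Kh (PV q1) := by
      rcases lt_trichotomy (Kh U) (Kh (PV q1)) with h | h | h
      · exact h
      · exact absurd (Khinj _ _ h) (hU_ne_P q1)
      · exact absurd (vio (XV q0 b₀) (PV q1) U B (W5 b₀) h hUltB
          (mXP q0 q1 b₀ (fun hh => hq1ne0 hh.symm))
          (msymm (mUP q1)) mUB (mXB q0 b₀)
          (Or.inl dUX0.symm)) (fun hf => hf)
    exact vio U (PV qk1) (XV qk b₀) B (step2.trans_le ho1k1) (W4 b₀) (XltB qk b₀)
      (mUP qk1)
      (msymm (mXP qk qk1 b₀ (fun hh => hqk1nek hh.symm)))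
      (mXB qk b₀) mUB
      (Or.inl dUXk)


end KneserAux

/-- For `k ≥ 2` and `n ≥ k`, the complement of `K(n,k)` is
semi-transitive iff `n ≤ 2k`. -/
theorem kneser_compl_semiTransitive_iff (n k : ℕ) (hk : 2 ≤ k) (hn : k ≤ n) :
    ((kneserGraph n k)ᶜ).SemiTransitive ↔ n ≤ 2 * k := by
  constructor
  · intro h
    by_contra hc
    push_neg at hc
    exact KneserAux.hard hk (by omega) h
  · intro h
    exact KneserAux.easy n k (by omega) h
end
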